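/- Let τ be a nop-free Boolean type of net with swap ∈ τ and τ ∩ save ≠ ∅ (where save = {nop,set,used,res,free}), let φ be an instance of cubic monotone 1-in-3 3SAT, and let A_φ be the bi-directed transition system associated to φ as defined in the context. If φ has a one-in-three model, then A_φ has the τ-SSP. -/

import Mathlib

/-!  Common framework: Boolean types of nets, transition systems (as labeled
edge relations), τ-regions, state separation. -/

inductive Interaction : Type
  | nop | inp | out | res | set | swap | used | free
  deriving DecidableEq

/-- The partial function on `{0,1}` (encoded as `Bool`, `false = 0`, `true = 1`)
defined by a Boolean interaction. -/
def Interaction.eval : Interaction → Bool → Option Bool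
  | .nop, x => some x
  | .inp, true => some false
  | .inp, false => none
  | .out, false => some true
  | .out, true => none
  | .res, _ => some false
  | .set, _ => some true
  | .swap, x => some (!x)
  | .used, true => some true
  | .used, false => none
  | .free, false => some false
  | .free, true => none

/-- `(sup, sig)` is a `τ`-region of the transition system given by the labeled
edge relation `edge`. -/
def IsRegion {S E : Type} (edge : S → E → S → Prop) (τ : Set Interaction)
    (sup : S → Bool) (sig : E → Interaction) : Prop :=
  (∀ e, sig e ∈ τ) ∧
    ∀ s e s', edge s e s' → (sig e).eval (sup s) = some (sup s')

/-- The `τ`-state separation property: every pair of distinct states (SSP atom)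
is solved by some `τ`-region. -/
def HasSSP {S E : Type} (edge : S → E → S → Prop) (τ : Set Interaction) : Prop :=
  ∀ s s' : S, s ≠ s' → ∃ sup sig, IsRegion edge τ sup sig ∧ sup s ≠ sup s'

def Deterministic {S E : Type} (edge : S → E → S → Prop) : Prop :=
  ∀ s e s₁ s₂, edge s e s₁ → edge s e s₂ → s₁ = s₂

inductive Reachable {S E : Type} (edge : S → E → S → Prop) : S → S → Prop
  | refl (s : S) : Reachable edge s s
  | tail {s t u : S} {e : E} : Reachable edge s t → edge t e u → Reachable edge s u

/-- `ι` is an initial state from which every state is reachable. -/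
def Initialized {S E : Type} (edge : S → E → S → Prop) (ι : S) : Prop :=
  ∀ s, Reachable edge ι s

def LoopFree {S E : Type} (edge : S → E → S → Prop) : Prop :=
  ∀ s e s', edge s e s' → s ≠ s'

def BiDirected {S E : Type} (edge : S → E → S → Prop) : Prop :=
  LoopFree edge ∧ ∀ s e s', edge s e s' → edge s' e s

/-- A region is normalized (for a `nop`-equipped type): no event has signature
`used` or `free`, and every event with signature in `{inp,out,res,set,swap}`
has an edge on which the support changes. -/
def Normalized {S E : Type} (edge : S → E → S → Prop)
    (sup : S → Bool) (sig : E → Interaction) : Prop :=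
  ∀ e, (sig e ≠ Interaction.used ∧ sig e ≠ Interaction.free) ∧
    ((sig e = Interaction.inp ∨ sig e = Interaction.out ∨ sig e = Interaction.res ∨
        sig e = Interaction.set ∨ sig e = Interaction.swap) →
      ∃ s s', edge s e s' ∧ sup s ≠ sup s')

/-- save = save₁ ∪ save₀ = {nop,set,used} ∪ {nop,res,free}. -/
def saveSet : Set Interaction :=
  {Interaction.nop, Interaction.set, Interaction.used, Interaction.res, Interaction.free}

/-- An instance of cubic monotone 1-in-3 3SAT: `m` clauses
`ζ i = {X (c0 i), X (c1 i), X (c2 i)}` over the `m` variables `Fin m`; each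
clause consists of three distinct variables and every variable occurs in
exactly three clauses. -/
def CubicMonotone {m : ℕ} (c0 c1 c2 : Fin m → Fin m) : Prop :=
  (∀ i, c0 i ≠ c1 i ∧ c0 i ≠ c2 i ∧ c1 i ≠ c2 i) ∧
    ∀ x : Fin m,
      (Finset.univ.filter fun i => c0 i = x ∨ c1 i = x ∨ c2 i = x).card = 3

/-- `M` is a one-in-three model: it contains exactly one variable of every
clause. -/
def OneInThreeModel {m : ℕ} (c0 c1 c2 : Fin m → Fin m) (M : Set (Fin m)) : Prop :=
  ∀ i : Fin m,
    (c0 i ∈ M ∧ c1 i ∉ M ∧ c2 i ∉ M) ∨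
      (c0 i ∉ M ∧ c1 i ∈ M ∧ c2 i ∉ M) ∨
      (c0 i ∉ M ∧ c1 i ∉ M ∧ c2 i ∈ M)

/-- The states of the bi-directed TS `A_φ` of the nop-free reduction:
the initial state `ι`; the connector states `⊥_j` (`j < 2m`) and `⊤_j`
(`j < 14m`); the gadget states of `G_i, F_i, G_i', F_i'` (`i < 7m`) and of
`T_{i,0}, T_{i,1}, T_{i,0}', T_{i,1}'` (`i < m`). -/
inductive BState (m : ℕ) : Type
  | iota : BState m
  | bot (j : Fin (2 * m)) : BState m
  | top (j : Fin (14 * m)) : BState m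
  | g (i : Fin (7 * m)) (j : Fin 5) : BState m
  | f (i : Fin (7 * m)) (j : Fin 5) : BState m
  | g' (i : Fin (7 * m)) (j : Fin 5) : BState m
  | f' (i : Fin (7 * m)) (j : Fin 5) : BState m
  | t0 (i : Fin m) (j : Fin 12) : BState m
  | t1 (i : Fin m) (j : Fin 4) : BState m
  | t0' (i : Fin m) (j : Fin 12) : BState m
  | t1' (i : Fin m) (j : Fin 4) : BState m

/-- The events of `A_φ`: `k₀, k₁`, `v_i, w_i, v_i', w_i'` (`i < 7m`), the
variables `X_x, X_x'` (`x < m`) and the connector events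
`⊕_j, ⊗_j, ⊙_j, ⊙_j', ⊖_j, ⊖_j'`. -/
inductive BEvent (m : ℕ) : Type
  | k0 : BEvent m
  | k1 : BEvent m
  | v (i : Fin (7 * m)) : BEvent m
  | w (i : Fin (7 * m)) : BEvent m
  | v' (i : Fin (7 * m)) : BEvent m
  | w' (i : Fin (7 * m)) : BEvent m
  | X (x : Fin m) : BEvent m
  | X' (x : Fin m) : BEvent m
  | oplus (j : Fin (2 * m)) : BEvent m
  | otimes (j : Fin (14 * m)) : BEvent m
  | odot (j : Fin (14 * m)) : BEvent m
  | odot' (j : Fin (14 * m)) : BEvent m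
  | ominus (j : Fin (2 * m)) : BEvent m
  | ominus' (j : Fin (2 * m)) : BEvent m

/-- `v_{7i+j}` for a clause index `i < m` and `j < 7`. -/
def vIdx {m : ℕ} (i : Fin m) (j : Fin 7) : Fin (7 * m) :=
  ⟨7 * i.val + j.val, by have := i.isLt; have := j.isLt; omega⟩

/-- The predecessor of `⊥_j` on the path `ι ⊕₀ ⊥₀ ⊕₁ ⊥₁ …`. -/
def prevBot {m : ℕ} (j : Fin (2 * m)) : BState m :=
  if j.val = 0 then BState.iota
  else BState.bot ⟨j.val - 1, by have := j.isLt; omega⟩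

/-- The predecessor of `⊤_j` on the path `ι ⊗₀ ⊤₀ ⊗₁ ⊤₁ …`. -/
def prevTop {m : ℕ} (j : Fin (14 * m)) : BState m :=
  if j.val = 0 then BState.iota
  else BState.top ⟨j.val - 1, by have := j.isLt; omega⟩

/-- The `j`-th gadget starting state `s_j` of the sequence
`g_{0,0}, f_{0,0}, g_{1,0}, f_{1,0}, …, g_{7m-1,0}, f_{7m-1,0}`. -/
def gadgetStart {m : ℕ} (j : Fin (14 * m)) : BState m :=
  if j.val % 2 = 0 then BState.g ⟨j.val / 2, by have := j.isLt; omega⟩ 0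
  else BState.f ⟨j.val / 2, by have := j.isLt; omega⟩ 0

/-- The `j`-th primed gadget starting state `s_j'`. -/
def gadgetStart' {m : ℕ} (j : Fin (14 * m)) : BState m :=
  if j.val % 2 = 0 then BState.g' ⟨j.val / 2, by have := j.isLt; omega⟩ 0
  else BState.f' ⟨j.val / 2, by have := j.isLt; omega⟩ 0

/-- One direction of every bi-directed edge of `A_φ`. -/
inductive BEdge0 {m : ℕ} (c0 c1 c2 : Fin m → Fin m) :
    BState m → BEvent m → BState m → Prop
  -- G_i = g_{i,0} v_i g_{i,1} w_i g_{i,2} k₀ g_{i,3} k₁ g_{i,4}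
  | gv (i : Fin (7 * m)) : BEdge0 c0 c1 c2 (.g i 0) (.v i) (.g i 1)
  | gw (i : Fin (7 * m)) : BEdge0 c0 c1 c2 (.g i 1) (.w i) (.g i 2)
  | gk0 (i : Fin (7 * m)) : BEdge0 c0 c1 c2 (.g i 2) .k0 (.g i 3)
  | gk1 (i : Fin (7 * m)) : BEdge0 c0 c1 c2 (.g i 3) .k1 (.g i 4)
  -- F_i = f_{i,0} v_i f_{i,1} w_i f_{i,2} k₁ f_{i,3} k₀ f_{i,4}
  | fv (i : Fin (7 * m)) : BEdge0 c0 c1 c2 (.f i 0) (.v i) (.f i 1)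
  | fw (i : Fin (7 * m)) : BEdge0 c0 c1 c2 (.f i 1) (.w i) (.f i 2)
  | fk1 (i : Fin (7 * m)) : BEdge0 c0 c1 c2 (.f i 2) .k1 (.f i 3)
  | fk0 (i : Fin (7 * m)) : BEdge0 c0 c1 c2 (.f i 3) .k0 (.f i 4)
  -- G_i' = g_{i,0}' v_i' g_{i,1}' w_i' g_{i,2}' k₁ g_{i,3}' k₀ g_{i,4}'
  | g'v (i : Fin (7 * m)) : BEdge0 c0 c1 c2 (.g' i 0) (.v' i) (.g' i 1)
  | g'w (i : Fin (7 * m)) : BEdge0 c0 c1 c2 (.g' i 1) (.w' i) (.g' i 2)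
  | g'k1 (i : Fin (7 * m)) : BEdge0 c0 c1 c2 (.g' i 2) .k1 (.g' i 3)
  | g'k0 (i : Fin (7 * m)) : BEdge0 c0 c1 c2 (.g' i 3) .k0 (.g' i 4)
  -- F_i' = f_{i,0}' v_i' f_{i,1}' w_i' f_{i,2}' k₀ f_{i,3}' k₁ f_{i,4}'
  | f'v (i : Fin (7 * m)) : BEdge0 c0 c1 c2 (.f' i 0) (.v' i) (.f' i 1)
  | f'w (i : Fin (7 * m)) : BEdge0 c0 c1 c2 (.f' i 1) (.w' i) (.f' i 2)
  | f'k0 (i : Fin (7 * m)) : BEdge0 c0 c1 c2 (.f' i 2) .k0 (.f' i 3)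
  | f'k1 (i : Fin (7 * m)) : BEdge0 c0 c1 c2 (.f' i 3) .k1 (.f' i 4)
  -- T_{i,0}
  | t0k0a (i : Fin m) : BEdge0 c0 c1 c2 (.t0 i 0) .k0 (.t0 i 1)
  | t0v0 (i : Fin m) : BEdge0 c0 c1 c2 (.t0 i 1) (.v (vIdx i 0)) (.t0 i 2)
  | t0v1 (i : Fin m) : BEdge0 c0 c1 c2 (.t0 i 2) (.v (vIdx i 1)) (.t0 i 3)
  | t0X0 (i : Fin m) : BEdge0 c0 c1 c2 (.t0 i 3) (.X (c0 i)) (.t0 i 4)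
  | t0v2 (i : Fin m) : BEdge0 c0 c1 c2 (.t0 i 4) (.v (vIdx i 2)) (.t0 i 5)
  | t0X1 (i : Fin m) : BEdge0 c0 c1 c2 (.t0 i 5) (.X (c1 i)) (.t0 i 6)
  | t0v3 (i : Fin m) : BEdge0 c0 c1 c2 (.t0 i 6) (.v (vIdx i 3)) (.t0 i 7)
  | t0X2 (i : Fin m) : BEdge0 c0 c1 c2 (.t0 i 7) (.X (c2 i)) (.t0 i 8)
  | t0v4 (i : Fin m) : BEdge0 c0 c1 c2 (.t0 i 8) (.v (vIdx i 4)) (.t0 i 9)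
  | t0v5 (i : Fin m) : BEdge0 c0 c1 c2 (.t0 i 9) (.v (vIdx i 5)) (.t0 i 10)
  | t0k0b (i : Fin m) : BEdge0 c0 c1 c2 (.t0 i 10) .k0 (.t0 i 11)
  -- T_{i,1}
  | t1X0 (i : Fin m) : BEdge0 c0 c1 c2 (.t1 i 0) (.X (c0 i)) (.t1 i 1)
  | t1v6 (i : Fin m) : BEdge0 c0 c1 c2 (.t1 i 1) (.v (vIdx i 6)) (.t1 i 2)
  | t1X2 (i : Fin m) : BEdge0 c0 c1 c2 (.t1 i 2) (.X (c2 i)) (.t1 i 3)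
  -- T_{i,0}'
  | t0'k1a (i : Fin m) : BEdge0 c0 c1 c2 (.t0' i 0) .k1 (.t0' i 1)
  | t0'v0 (i : Fin m) : BEdge0 c0 c1 c2 (.t0' i 1) (.v' (vIdx i 0)) (.t0' i 2)
  | t0'v1 (i : Fin m) : BEdge0 c0 c1 c2 (.t0' i 2) (.v' (vIdx i 1)) (.t0' i 3)
  | t0'X0 (i : Fin m) : BEdge0 c0 c1 c2 (.t0' i 3) (.X' (c0 i)) (.t0' i 4)
  | t0'v2 (i : Fin m) : BEdge0 c0 c1 c2 (.t0' i 4) (.v' (vIdx i 2)) (.t0' i 5)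
  | t0'X1 (i : Fin m) : BEdge0 c0 c1 c2 (.t0' i 5) (.X' (c1 i)) (.t0' i 6)
  | t0'v3 (i : Fin m) : BEdge0 c0 c1 c2 (.t0' i 6) (.v' (vIdx i 3)) (.t0' i 7)
  | t0'X2 (i : Fin m) : BEdge0 c0 c1 c2 (.t0' i 7) (.X' (c2 i)) (.t0' i 8)
  | t0'v4 (i : Fin m) : BEdge0 c0 c1 c2 (.t0' i 8) (.v' (vIdx i 4)) (.t0' i 9)
  | t0'v5 (i : Fin m) : BEdge0 c0 c1 c2 (.t0' i 9) (.v' (vIdx i 5)) (.t0' i 10)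
  | t0'k1b (i : Fin m) : BEdge0 c0 c1 c2 (.t0' i 10) .k1 (.t0' i 11)
  -- T_{i,1}'
  | t1'X0 (i : Fin m) : BEdge0 c0 c1 c2 (.t1' i 0) (.X' (c0 i)) (.t1' i 1)
  | t1'v6 (i : Fin m) : BEdge0 c0 c1 c2 (.t1' i 1) (.v' (vIdx i 6)) (.t1' i 2)
  | t1'X2 (i : Fin m) : BEdge0 c0 c1 c2 (.t1' i 2) (.X' (c2 i)) (.t1' i 3)
  -- connector paths ι ⊕₀ ⊥₀ ⊕₁ ⊥₁ … and ι ⊗₀ ⊤₀ ⊗₁ ⊤₁ …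
  | oplus (j : Fin (2 * m)) : BEdge0 c0 c1 c2 (prevBot j) (.oplus j) (.bot j)
  | otimes (j : Fin (14 * m)) : BEdge0 c0 c1 c2 (prevTop j) (.otimes j) (.top j)
  -- ⊤_j ⊙_j s_j and ⊤_j ⊙_j' s_j'
  | odot (j : Fin (14 * m)) : BEdge0 c0 c1 c2 (.top j) (.odot j) (gadgetStart j)
  | odot' (j : Fin (14 * m)) : BEdge0 c0 c1 c2 (.top j) (.odot' j) (gadgetStart' j)
  -- ⊥_{2i} ⊖_{2i} t_{i,0,0}, ⊥_{2i+1} ⊖_{2i+1} t_{i,1,0} and primed versions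
  | ominus0 (i : Fin m) :
      BEdge0 c0 c1 c2 (.bot ⟨2 * i.val, by have := i.isLt; omega⟩)
        (.ominus ⟨2 * i.val, by have := i.isLt; omega⟩) (.t0 i 0)
  | ominus1 (i : Fin m) :
      BEdge0 c0 c1 c2 (.bot ⟨2 * i.val + 1, by have := i.isLt; omega⟩)
        (.ominus ⟨2 * i.val + 1, by have := i.isLt; omega⟩) (.t1 i 0)
  | ominus0' (i : Fin m) :
      BEdge0 c0 c1 c2 (.bot ⟨2 * i.val, by have := i.isLt; omega⟩)
        (.ominus' ⟨2 * i.val, by have := i.isLt; omega⟩) (.t0' i 0)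
  | ominus1' (i : Fin m) :
      BEdge0 c0 c1 c2 (.bot ⟨2 * i.val + 1, by have := i.isLt; omega⟩)
        (.ominus' ⟨2 * i.val + 1, by have := i.isLt; omega⟩) (.t1' i 0)

/-- The (bi-directed) edge relation of `A_φ`: the symmetric closure of the
listed edges. -/
def BEdge {m : ℕ} (c0 c1 c2 : Fin m → Fin m) :
    BState m → BEvent m → BState m → Prop :=
  fun s e s' => BEdge0 c0 c1 c2 s e s' ∨ BEdge0 c0 c1 c2 s' e s

/-! ### Auxiliary development -/

deriving instance DecidableEq for BState
deriving instance DecidableEq for BEvent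

section Aux

variable {m : ℕ}

def parN (n : ℕ) : Bool := decide (n % 2 = 1)
def pw (n : ℕ) : Bool := decide (n = 0 ∨ n = 3)
def pG (n : ℕ) : Bool := decide (n = 0 ∨ n = 2)
def pF (n : ℕ) : Bool := decide (n = 1 ∨ n = 4)
def pv (n : ℕ) : Bool := decide (n = 2 ∨ n = 4)
def patq (q n : ℕ) : Bool := if n < q then parN (q - 1 - n) else parN (n - q)
def pT0 (n : ℕ) : Bool := decide (n = 2 ∨ n = 5 ∨ n = 7 ∨ n = 9)
def pT1 (n : ℕ) : Bool := decide (n = 2 ∨ n = 4 ∨ n = 7 ∨ n = 9)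
def pT2 (n : ℕ) : Bool := decide (n = 2 ∨ n = 4 ∨ n = 6 ∨ n = 9)
def p10 (n : ℕ) : Bool := decide (n = 2)
def p12 (n : ℕ) : Bool := decide (n = 1)
def qOf (p : Fin 7) : ℕ :=
  if p.val = 0 then 2 else if p.val = 1 then 3 else if p.val = 2 then 5
  else if p.val = 3 then 7 else if p.val = 4 then 9 else 10
def t0pat (p : Fin 7) (n : ℕ) : Bool := if p.val ≤ 5 then patq (qOf p) n else parN n
def t1pat (p : Fin 7) (n : ℕ) : Bool := if p.val = 6 then pw n else parN n
def gpat (p : Fin 4) (n : ℕ) : Bool :=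
  if p.val = 0 then parN n else if p.val = 1 then pw n else if p.val = 2 then pG n else pv n
def fpat (p : Fin 4) (n : ℕ) : Bool :=
  if p.val = 0 then parN n else if p.val = 1 then pw n else if p.val = 2 then pF n else pv n

lemma gcov : ∀ j j2 : Fin 5, j ≠ j2 → ∃ p : Fin 4, gpat p j.val ≠ gpat p j2.val := by decide
lemma fcov : ∀ j j2 : Fin 5, j ≠ j2 → ∃ p : Fin 4, fpat p j.val ≠ fpat p j2.val := by decide
lemma t0cov : ∀ j j2 : Fin 12, j ≠ j2 → ∃ p : Fin 7, t0pat p j.val ≠ t0pat p j2.val := by decide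
lemma t1cov : ∀ j j2 : Fin 4, j ≠ j2 → ∃ p : Fin 7, t1pat p j.val ≠ t1pat p j2.val := by decide

def isConn : BState m → Bool
  | .iota => true | .bot _ => true | .top _ => true | _ => false

def inst : BState m → BState m
  | .g i _ => .g i 0 | .f i _ => .f i 0 | .g' i _ => .g' i 0 | .f' i _ => .f' i 0
  | .t0 i _ => .t0 i 0 | .t1 i _ => .t1 i 0 | .t0' i _ => .t0' i 0 | .t1' i _ => .t1' i 0
  | x => x

def parS : BState m → Bool
  | .g _ j => parN j.val | .f _ j => parN j.val | .g' _ j => parN j.val | .f' _ j => parN j.val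
  | .t0 _ j => parN j.val | .t1 _ j => parN j.val | .t0' _ j => parN j.val | .t1' _ j => parN j.val
  | _ => false

/-- The per-edge condition of a "normalized" region: events with `W e = true`
are `swap`-labelled (support flips), other events have support `false` on both
endpoints. -/
def Cond (sup0 : BState m → Bool) (W : BEvent m → Bool)
    (s : BState m) (e : BEvent m) (s' : BState m) : Prop :=
  (W e = true → sup0 s' = !sup0 s) ∧ (W e = false → sup0 s = false ∧ sup0 s' = false)

def EdgeOK (c0 c1 c2 : Fin m → Fin m) (sup0 : BState m → Bool) (W : BEvent m → Bool) : Prop :=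
  ∀ s e s', BEdge0 c0 c1 c2 s e s' → Cond sup0 W s e s'

lemma cond_flip {sup0 : BState m → Bool} {W s e s'}
    (h : sup0 s' = !sup0 s) (hW : W e = true) : Cond sup0 W s e s' :=
  ⟨fun _ => h, fun h2 => absurd (hW.symm.trans h2) (by simp)⟩

lemma cond_zero {sup0 : BState m → Bool} {W s e s'}
    (h1 : sup0 s = false) (h2 : sup0 s' = false) (hW : W e = false) : Cond sup0 W s e s' :=
  ⟨fun h => absurd (hW.symm.trans h) (by simp), fun _ => ⟨h1, h2⟩⟩

lemma cond_target {sup0 : BState m → Bool} {W s e s'}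
    (h : sup0 s = false) (hW : W e = sup0 s') : Cond sup0 W s e s' := by
  constructor
  · intro h1; rw [h, ← hW, h1]; rfl
  · intro h2; exact ⟨h, by rw [← hW, h2]⟩

/-- flip across an `ite` with the same condition on both sides -/
lemma cond_f2 {c : Prop} [Decidable c] {sup0 : BState m → Bool} {W s e s'} {a b a' b' : Bool}
    (hW : W e = true) (hs : sup0 s = if c then a else b) (hs' : sup0 s' = if c then a' else b')
    (ha : a' = !a) (hb : b' = !b) : Cond sup0 W s e s' :=
  cond_flip (by rw [hs, hs']; by_cases h : c <;> simp [h, ha, hb]) hW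

/-- the `v`-edge of a `G`/`F` gadget: zero if the condition holds, flip otherwise -/
lemma cond_v {c : Prop} [Decidable c] {sup0 : BState m → Bool} {W s e s'} {a b a' b' : Bool}
    (hW : W e = decide ¬c) (hs : sup0 s = if c then a else b) (hs' : sup0 s' = if c then a' else b')
    (ha : a = false) (ha' : a' = false) (hb : b' = !b) : Cond sup0 W s e s' := by
  by_cases h : c
  · exact cond_zero (by rw [hs, if_pos h, ha]) (by rw [hs', if_pos h, ha'])
      (by rw [hW]; simp [h])
  · exact cond_flip (by rw [hs, hs', if_neg h, if_neg h, hb]) (by rw [hW]; simp [h])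

def mkW (sup0 : BState m → Bool) (Wg : BEvent m → Bool) : BEvent m → Bool
  | .oplus _ => false
  | .otimes _ => false
  | .odot j => sup0 (gadgetStart j)
  | .odot' j => sup0 (gadgetStart' j)
  | .ominus j => sup0 (if j.val % 2 = 0 then .t0 ⟨j.val / 2, by have := j.isLt; omega⟩ 0
      else .t1 ⟨j.val / 2, by have := j.isLt; omega⟩ 0)
  | .ominus' j => sup0 (if j.val % 2 = 0 then .t0' ⟨j.val / 2, by have := j.isLt; omega⟩ 0
      else .t1' ⟨j.val / 2, by have := j.isLt; omega⟩ 0)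
  | .k0 => Wg .k0
  | .k1 => Wg .k1
  | .v i => Wg (.v i)
  | .w i => Wg (.w i)
  | .v' i => Wg (.v' i)
  | .w' i => Wg (.w' i)
  | .X x => Wg (.X x)
  | .X' x => Wg (.X' x)

lemma hconn_of (sup0 : BState m → Bool) (h1 : sup0 .iota = false)
    (h2 : ∀ j, sup0 (.bot j) = false) (h3 : ∀ j, sup0 (.top j) = false) :
    ∀ x : BState m, isConn x = true → sup0 x = false := by
  intro x hx
  cases x
  case iota => exact h1
  case bot j => exact h2 j
  case top j => exact h3 j
  all_goals simp [isConn] at hx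

section Spokes
variable {sup0 : BState m → Bool} {Wg : BEvent m → Bool}

lemma mkW_om0 (j : Fin (2 * m)) (i : Fin m) (hji : j.val = 2 * i.val) :
    mkW sup0 Wg (.ominus j) = sup0 (.t0 i 0) := by
  show sup0 _ = _
  congr 1
  rw [if_pos (by omega)]
  congr 1
  apply Fin.ext
  show j.val / 2 = i.val
  omega

lemma mkW_om1 (j : Fin (2 * m)) (i : Fin m) (hji : j.val = 2 * i.val + 1) :
    mkW sup0 Wg (.ominus j) = sup0 (.t1 i 0) := by
  show sup0 _ = _
  congr 1
  rw [if_neg (by omega)]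
  congr 1
  apply Fin.ext
  show j.val / 2 = i.val
  omega

lemma mkW_om0' (j : Fin (2 * m)) (i : Fin m) (hji : j.val = 2 * i.val) :
    mkW sup0 Wg (.ominus' j) = sup0 (.t0' i 0) := by
  show sup0 _ = _
  congr 1
  rw [if_pos (by omega)]
  congr 1
  apply Fin.ext
  show j.val / 2 = i.val
  omega

lemma mkW_om1' (j : Fin (2 * m)) (i : Fin m) (hji : j.val = 2 * i.val + 1) :
    mkW sup0 Wg (.ominus' j) = sup0 (.t1' i 0) := by
  show sup0 _ = _
  congr 1
  rw [if_neg (by omega)]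
  congr 1
  apply Fin.ext
  show j.val / 2 = i.val
  omega

lemma cond_oplus (hc : ∀ x : BState m, isConn x = true → sup0 x = false) (j : Fin (2 * m)) :
    Cond sup0 (mkW sup0 Wg) (prevBot j) (.oplus j) (.bot j) := by
  refine cond_zero ?_ (hc _ rfl) rfl
  unfold prevBot; split
  · exact hc _ rfl
  · exact hc _ rfl

lemma cond_otimes (hc : ∀ x : BState m, isConn x = true → sup0 x = false) (j : Fin (14 * m)) :
    Cond sup0 (mkW sup0 Wg) (prevTop j) (.otimes j) (.top j) := by
  refine cond_zero ?_ (hc _ rfl) rfl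
  unfold prevTop; split
  · exact hc _ rfl
  · exact hc _ rfl

lemma cond_odot (hc : ∀ x : BState m, isConn x = true → sup0 x = false) (j : Fin (14 * m)) :
    Cond sup0 (mkW sup0 Wg) (.top j) (.odot j) (gadgetStart j) :=
  cond_target (hc _ rfl) rfl

lemma cond_odot' (hc : ∀ x : BState m, isConn x = true → sup0 x = false) (j : Fin (14 * m)) :
    Cond sup0 (mkW sup0 Wg) (.top j) (.odot' j) (gadgetStart' j) :=
  cond_target (hc _ rfl) rfl

lemma cond_om0 (hc : ∀ x : BState m, isConn x = true → sup0 x = false) (i : Fin m) {h1 h2} :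
    Cond sup0 (mkW sup0 Wg) (.bot ⟨2 * i.val, h1⟩) (.ominus ⟨2 * i.val, h2⟩) (.t0 i 0) :=
  cond_target (hc _ rfl) (mkW_om0 _ i rfl)

lemma cond_om1 (hc : ∀ x : BState m, isConn x = true → sup0 x = false) (i : Fin m) {h1 h2} :
    Cond sup0 (mkW sup0 Wg) (.bot ⟨2 * i.val + 1, h1⟩) (.ominus ⟨2 * i.val + 1, h2⟩) (.t1 i 0) :=
  cond_target (hc _ rfl) (mkW_om1 _ i rfl)

lemma cond_om0' (hc : ∀ x : BState m, isConn x = true → sup0 x = false) (i : Fin m) {h1 h2} :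
    Cond sup0 (mkW sup0 Wg) (.bot ⟨2 * i.val, h1⟩) (.ominus' ⟨2 * i.val, h2⟩) (.t0' i 0) :=
  cond_target (hc _ rfl) (mkW_om0' _ i rfl)

lemma cond_om1' (hc : ∀ x : BState m, isConn x = true → sup0 x = false) (i : Fin m) {h1 h2} :
    Cond sup0 (mkW sup0 Wg) (.bot ⟨2 * i.val + 1, h1⟩) (.ominus' ⟨2 * i.val + 1, h2⟩) (.t1' i 0) :=
  cond_target (hc _ rfl) (mkW_om1' _ i rfl)

end Spokes

/-- From a normalized pre-region, build a genuine `τ`-region separating `s, t`. -/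
lemma solve {τ : Set Interaction} (hswap : Interaction.swap ∈ τ)
    {σ : Interaction} (hστ : σ ∈ τ) (hσs : σ ∈ saveSet) (hσn : σ ≠ Interaction.nop)
    {c0 c1 c2 : Fin m → Fin m} {sup0 : BState m → Bool} {W : BEvent m → Bool}
    (hok : EdgeOK c0 c1 c2 sup0 W) {s t : BState m} (hsep : sup0 s ≠ sup0 t) :
    ∃ sup sig, IsRegion (BEdge c0 c1 c2) τ sup sig ∧ sup s ≠ sup t := by
  have hσ4 : σ = .set ∨ σ = .used ∨ σ = .res ∨ σ = .free := by
    simp only [saveSet, Set.mem_insert_iff, Set.mem_singleton_iff] at hσs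
    rcases hσs with h|h|h|h|h
    · exact absurd h hσn
    · exact Or.inl h
    · exact Or.inr (Or.inl h)
    · exact Or.inr (Or.inr (Or.inl h))
    · exact Or.inr (Or.inr (Or.inr h))
  set b : Bool := decide (σ = .set ∨ σ = .used) with hb
  have hσb : σ.eval b = some b := by
    rcases hσ4 with rfl|rfl|rfl|rfl <;> rfl
  refine ⟨fun x => Bool.xor (sup0 x) b, fun e => if W e then .swap else σ, ⟨fun e => ?_, ?_⟩, ?_⟩
  · dsimp only; split <;> assumption
  · intro x e y hxy
    have hcond : (W e = true → sup0 y = !sup0 x) ∧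
        (W e = false → sup0 x = false ∧ sup0 y = false) := by
      rcases hxy with h | h
      · exact hok _ _ _ h
      · obtain ⟨h1, h2⟩ := hok _ _ _ h
        refine ⟨fun hw => by rw [h1 hw]; simp, fun hw => ⟨(h2 hw).2, (h2 hw).1⟩⟩
    cases hW : W e
    · obtain ⟨hx0, hy0⟩ := hcond.2 hW
      simp only [hW, Bool.false_eq_true, if_false, hx0, hy0, Bool.false_xor]
      exact hσb
    · have hf := hcond.1 hW
      simp only [hW, if_true, hf]
      cases sup0 x <;> cases b <;> rfl
  · dsimp only
    intro h
    apply hsep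
    cases b <;> simpa using h

end Aux

section Regions
variable {m : ℕ} (c0 c1 c2 : Fin m → Fin m)

/-! Region A: all `w_i` zero, everything else swap. -/

def supA : BState m → Bool
  | .g _ j => pw j.val | .f _ j => pw j.val
  | .g' _ j => parN j.val | .f' _ j => parN j.val
  | .t0 _ j => parN j.val | .t1 _ j => parN j.val
  | .t0' _ j => parN j.val | .t1' _ j => parN j.val
  | _ => false

def WgA : BEvent m → Bool
  | .w _ => false
  | _ => true

lemma edgeok_A : EdgeOK c0 c1 c2 (supA (m := m)) (mkW supA WgA) := by
  have hc : ∀ x : BState m, isConn x = true → supA x = false :=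
    hconn_of _ rfl (fun _ => rfl) (fun _ => rfl)
  intro s e s' h
  cases h <;>
    first
    | exact cond_oplus hc _
    | exact cond_otimes hc _
    | exact cond_odot hc _
    | exact cond_odot' hc _
    | exact cond_om0 hc _
    | exact cond_om1 hc _
    | exact cond_om0' hc _
    | exact cond_om1' hc _
    | exact cond_flip rfl rfl
    | exact cond_zero rfl rfl rfl

/-! Region A': all `w'_i` zero. -/

def supA' : BState m → Bool
  | .g' _ j => pw j.val | .f' _ j => pw j.val
  | .g _ j => parN j.val | .f _ j => parN j.val
  | .t0 _ j => parN j.val | .t1 _ j => parN j.val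
  | .t0' _ j => parN j.val | .t1' _ j => parN j.val
  | _ => false

def WgA' : BEvent m → Bool
  | .w' _ => false
  | _ => true

lemma edgeok_A' : EdgeOK c0 c1 c2 (supA' (m := m)) (mkW supA' WgA') := by
  have hc : ∀ x : BState m, isConn x = true → supA' x = false :=
    hconn_of _ rfl (fun _ => rfl) (fun _ => rfl)
  intro s e s' h
  cases h <;>
    first
    | exact cond_oplus hc _
    | exact cond_otimes hc _
    | exact cond_odot hc _
    | exact cond_odot' hc _
    | exact cond_om0 hc _
    | exact cond_om1 hc _
    | exact cond_om0' hc _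
    | exact cond_om1' hc _
    | exact cond_flip rfl rfl
    | exact cond_zero rfl rfl rfl

/-! Region Sh: every event swap, with a free shift on each gadget. -/

lemma xor_flip (b p q : Bool) (h : q = !p) : (Bool.xor b q) = !(Bool.xor b p) := by
  cases b <;> simp [h]

def supSh (sh : BState m → Bool) : BState m → Bool :=
  fun x => !(isConn x) && (Bool.xor (sh (inst x)) (parS x))

lemma edgeok_Sh (sh : BState m → Bool) :
    EdgeOK c0 c1 c2 (supSh sh) (mkW (supSh sh) (fun _ => true)) := by
  have hc : ∀ x : BState m, isConn x = true → supSh sh x = false :=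
    hconn_of _ rfl (fun _ => rfl) (fun _ => rfl)
  intro s e s' h
  cases h <;>
    first
    | exact cond_oplus hc _
    | exact cond_otimes hc _
    | exact cond_odot hc _
    | exact cond_odot' hc _
    | exact cond_om0 hc _
    | exact cond_om1 hc _
    | exact cond_om0' hc _
    | exact cond_om1' hc _
    | exact cond_flip (xor_flip _ _ _ (by rfl)) rfl

end Regions

section RegionI
variable {m : ℕ} (c0 c1 c2 : Fin m → Fin m)

/-! Region I: indicator of a single connector state `c`. -/

def WI (c : BState m) : BEvent m → Bool
  | .oplus j => decide (prevBot j = c) || decide ((BState.bot j : BState m) = c)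
  | .otimes j => decide (prevTop j = c) || decide ((BState.top j : BState m) = c)
  | .odot j => decide ((BState.top j : BState m) = c)
  | .odot' j => decide ((BState.top j : BState m) = c)
  | .ominus j => decide ((BState.bot j : BState m) = c)
  | .ominus' j => decide ((BState.bot j : BState m) = c)
  | _ => false

lemma prevBot_ne_bot (j : Fin (2 * m)) : prevBot j ≠ .bot j := by
  unfold prevBot
  split
  · exact fun h => by cases h
  next hj =>
    intro h
    injection h with h'
    have h2 : j.val - 1 = j.val := congrArg Fin.val h'
    omega

lemma prevTop_ne_top (j : Fin (14 * m)) : prevTop j ≠ .top j := by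
  unfold prevTop
  split
  · exact fun h => by cases h
  next hj =>
    intro h
    injection h with h'
    have h2 : j.val - 1 = j.val := congrArg Fin.val h'
    omega

lemma gadgetStart_nc (j : Fin (14 * m)) : isConn (gadgetStart (m := m) j) = false := by
  unfold gadgetStart; split <;> rfl

lemma gadgetStart'_nc (j : Fin (14 * m)) : isConn (gadgetStart' (m := m) j) = false := by
  unfold gadgetStart'; split <;> rfl

lemma condI_omGen (c : BState m) (hnc : ∀ x : BState m, isConn x = false → decide (x = c) = false)
    (j : Fin (2 * m)) (e : BEvent m) (hW : WI c e = decide ((BState.bot j : BState m) = c))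
    (x : BState m) (hx : isConn x = false) :
    Cond (fun y => decide (y = c)) (WI c) (.bot j) e x := by
  by_cases h1 : (BState.bot j : BState m) = c
  · exact cond_flip (by rw [hnc _ hx, decide_eq_true h1]; rfl)
      (by rw [hW, decide_eq_true h1])
  · exact cond_zero (decide_eq_false h1) (hnc _ hx)
      (by rw [hW, decide_eq_false h1])

lemma condI_odotGen (c : BState m) (hnc : ∀ x : BState m, isConn x = false → decide (x = c) = false)
    (j : Fin (14 * m)) (e : BEvent m) (hW : WI c e = decide ((BState.top j : BState m) = c))
    (x : BState m) (hx : isConn x = false) :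
    Cond (fun y => decide (y = c)) (WI c) (.top j) e x := by
  by_cases h1 : (BState.top j : BState m) = c
  · exact cond_flip (by rw [hnc _ hx, decide_eq_true h1]; rfl)
      (by rw [hW, decide_eq_true h1])
  · exact cond_zero (decide_eq_false h1) (hnc _ hx)
      (by rw [hW, decide_eq_false h1])

lemma condI_odot (c : BState m) (hnc : ∀ x : BState m, isConn x = false → decide (x = c) = false)
    (j : Fin (14 * m)) :
    Cond (fun y => decide (y = c)) (WI c) (.top j) (.odot j) (gadgetStart j) :=
  condI_odotGen c hnc j (.odot j) rfl _ (gadgetStart_nc j)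

lemma condI_odot' (c : BState m) (hnc : ∀ x : BState m, isConn x = false → decide (x = c) = false)
    (j : Fin (14 * m)) :
    Cond (fun y => decide (y = c)) (WI c) (.top j) (.odot' j) (gadgetStart' j) :=
  condI_odotGen c hnc j (.odot' j) rfl _ (gadgetStart'_nc j)

lemma condI_om0 (c : BState m) (hnc : ∀ x : BState m, isConn x = false → decide (x = c) = false)
    (i : Fin m) {h1 h2} :
    Cond (fun y => decide (y = c)) (WI c) (.bot ⟨2 * i.val, h1⟩) (.ominus ⟨2 * i.val, h2⟩) (.t0 i 0) :=
  condI_omGen c hnc ⟨2 * i.val, h1⟩ (.ominus ⟨2 * i.val, h2⟩) rfl _ rfl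

lemma condI_om1 (c : BState m) (hnc : ∀ x : BState m, isConn x = false → decide (x = c) = false)
    (i : Fin m) {h1 h2} :
    Cond (fun y => decide (y = c)) (WI c) (.bot ⟨2 * i.val + 1, h1⟩) (.ominus ⟨2 * i.val + 1, h2⟩) (.t1 i 0) :=
  condI_omGen c hnc ⟨2 * i.val + 1, h1⟩ (.ominus ⟨2 * i.val + 1, h2⟩) rfl _ rfl

lemma condI_om0' (c : BState m) (hnc : ∀ x : BState m, isConn x = false → decide (x = c) = false)
    (i : Fin m) {h1 h2} :
    Cond (fun y => decide (y = c)) (WI c) (.bot ⟨2 * i.val, h1⟩) (.ominus' ⟨2 * i.val, h2⟩) (.t0' i 0) :=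
  condI_omGen c hnc ⟨2 * i.val, h1⟩ (.ominus' ⟨2 * i.val, h2⟩) rfl _ rfl

lemma condI_om1' (c : BState m) (hnc : ∀ x : BState m, isConn x = false → decide (x = c) = false)
    (i : Fin m) {h1 h2} :
    Cond (fun y => decide (y = c)) (WI c) (.bot ⟨2 * i.val + 1, h1⟩) (.ominus' ⟨2 * i.val + 1, h2⟩) (.t1' i 0) :=
  condI_omGen c hnc ⟨2 * i.val + 1, h1⟩ (.ominus' ⟨2 * i.val + 1, h2⟩) rfl _ rfl

lemma edgeok_I (c : BState m) (hcc : isConn c = true) :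
    EdgeOK c0 c1 c2 (fun x => decide (x = c)) (WI c) := by
  have hnc : ∀ x : BState m, isConn x = false → decide (x = c) = false := by
    intro x hx
    apply decide_eq_false
    rintro rfl
    rw [hcc] at hx; cases hx
  intro s e s' h
  cases h <;>
    first
    | exact cond_zero (hnc _ rfl) (hnc _ rfl) rfl
    | exact condI_odot c hnc _
    | exact condI_odot' c hnc _
    | exact condI_om0 c hnc _
    | exact condI_om1 c hnc _
    | exact condI_om0' c hnc _
    | exact condI_om1' c hnc _
    | skip
  -- remaining: oplus, otimes
  case oplus j =>
    by_cases h1 : prevBot j = c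
    · refine cond_flip ?_ ?_
      · rw [decide_eq_true h1,
          decide_eq_false (fun h2 => prevBot_ne_bot j (h1.trans h2.symm))]
        rfl
      · show (decide (prevBot j = c) || decide ((BState.bot j : BState m) = c)) = true
        rw [decide_eq_true h1]; rfl
    · by_cases h2 : (BState.bot j : BState m) = c
      · refine cond_flip ?_ ?_
        · rw [decide_eq_true h2, decide_eq_false h1]; rfl
        · show (decide (prevBot j = c) || decide ((BState.bot j : BState m) = c)) = true
          rw [decide_eq_true h2, Bool.or_true]
      · exact cond_zero (decide_eq_false h1) (decide_eq_false h2)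
          (by show (decide (prevBot j = c) || decide ((BState.bot j : BState m) = c)) = false
              rw [decide_eq_false h1, decide_eq_false h2]; rfl)
  case otimes j =>
    by_cases h1 : prevTop j = c
    · refine cond_flip ?_ ?_
      · rw [decide_eq_true h1,
          decide_eq_false (fun h2 => prevTop_ne_top j (h1.trans h2.symm))]
        rfl
      · show (decide (prevTop j = c) || decide ((BState.top j : BState m) = c)) = true
        rw [decide_eq_true h1]; rfl
    · by_cases h2 : (BState.top j : BState m) = c
      · refine cond_flip ?_ ?_
        · rw [decide_eq_true h2, decide_eq_false h1]; rfl
        · show (decide (prevTop j = c) || decide ((BState.top j : BState m) = c)) = true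
          rw [decide_eq_true h2, Bool.or_true]
      · exact cond_zero (decide_eq_false h1) (decide_eq_false h2)
          (by show (decide (prevTop j = c) || decide ((BState.top j : BState m) = c)) = false
              rw [decide_eq_false h1, decide_eq_false h2]; rfl)

end RegionI

section RegionB
variable {m : ℕ} (c0 c1 c2 : Fin m → Fin m)

/-! Region B: `k1` and the primed model variables `X'_x (x ∈ M)` zero. -/

def supB (c0 c1 : Fin m → Fin m) (MB : Fin m → Bool) : BState m → Bool
  | .g _ j => pG j.val | .f _ j => pF j.val | .g' _ j => pF j.val | .f' _ j => pG j.val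
  | .t0 _ j => parN j.val | .t1 _ j => parN j.val
  | .t0' i j => if MB (c0 i) then pT0 j.val else if MB (c1 i) then pT1 j.val else pT2 j.val
  | .t1' i j => if MB (c0 i) then p10 j.val else if MB (c1 i) then parN j.val else p12 j.val
  | _ => false

def WgB (MB : Fin m → Bool) : BEvent m → Bool
  | .k1 => false
  | .X' x => !(MB x)
  | _ => true

lemma edgeok_B (MB : Fin m → Bool)
    (hM13 : ∀ i, (MB (c0 i) = true ∧ MB (c1 i) = false ∧ MB (c2 i) = false) ∨
      (MB (c0 i) = false ∧ MB (c1 i) = true ∧ MB (c2 i) = false) ∨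
      (MB (c0 i) = false ∧ MB (c1 i) = false ∧ MB (c2 i) = true)) :
    EdgeOK c0 c1 c2 (supB c0 c1 MB) (mkW (supB c0 c1 MB) (WgB MB)) := by
  have hc : ∀ x : BState m, isConn x = true → supB c0 c1 MB x = false :=
    hconn_of _ rfl (fun _ => rfl) (fun _ => rfl)
  intro s e s' h
  cases h <;>
    first
    | exact cond_oplus hc _
    | exact cond_otimes hc _
    | exact cond_odot hc _
    | exact cond_odot' hc _
    | exact cond_om0 hc _
    | exact cond_om1 hc _
    | exact cond_om0' hc _
    | exact cond_om1' hc _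
    | exact cond_flip rfl rfl
    | exact cond_zero rfl rfl rfl
    | (rename_i i
       rcases hM13 i with ⟨hA, hB, hC⟩ | ⟨hA, hB, hC⟩ | ⟨hA, hB, hC⟩ <;>
         first
         | (refine cond_zero ?_ ?_ ?_ <;> (try simp only [supB, mkW, WgB, hA, hB, hC]) <;> decide)
         | (refine cond_flip ?_ ?_ <;> (try simp only [supB, mkW, WgB, hA, hB, hC]) <;> decide))

end RegionB

section RegionE
variable {m : ℕ} (c0 c1 c2 : Fin m → Fin m)

/-! Region E: all `v_j` with `j ≡ p [MOD 7]` zero, everything else swap. -/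

lemma vIdx_mod {m : ℕ} (i : Fin m) (j : Fin 7) : (vIdx i j).val % 7 = j.val := by
  have := j.isLt
  show (7 * i.val + j.val) % 7 = j.val
  omega

def supE (p : Fin 7) : BState m → Bool
  | .g i j => if i.val % 7 = p.val then pv j.val else parN j.val
  | .f i j => if i.val % 7 = p.val then pv j.val else parN j.val
  | .t0 _ j => t0pat p j.val
  | .t1 _ j => t1pat p j.val
  | .g' _ j => parN j.val | .f' _ j => parN j.val
  | .t0' _ j => parN j.val | .t1' _ j => parN j.val
  | _ => false

def WgE (p : Fin 7) : BEvent m → Bool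
  | .v j => decide (¬ j.val % 7 = p.val)
  | _ => true

lemma edgeok_E (p : Fin 7) : EdgeOK c0 c1 c2 (supE p) (mkW (supE p) (WgE p)) := by
  have hc : ∀ x : BState m, isConn x = true → supE p x = false :=
    hconn_of _ rfl (fun _ => rfl) (fun _ => rfl)
  fin_cases p <;>
  · intro s e s' h
    cases h with
    | oplus j => exact cond_oplus hc _
    | otimes j => exact cond_otimes hc _
    | odot j => exact cond_odot hc _
    | odot' j => exact cond_odot' hc _
    | ominus0 i => exact cond_om0 hc _
    | ominus1 i => exact cond_om1 hc _
    | ominus0' i => exact cond_om0' hc _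
    | ominus1' i => exact cond_om1' hc _
    | gv i => exact cond_v rfl rfl rfl rfl rfl rfl
    | fv i => exact cond_v rfl rfl rfl rfl rfl rfl
    | gw i => exact cond_f2 rfl rfl rfl rfl rfl
    | gk0 i => exact cond_f2 rfl rfl rfl rfl rfl
    | gk1 i => exact cond_f2 rfl rfl rfl rfl rfl
    | fw i => exact cond_f2 rfl rfl rfl rfl rfl
    | fk1 i => exact cond_f2 rfl rfl rfl rfl rfl
    | fk0 i => exact cond_f2 rfl rfl rfl rfl rfl
    | g'v i => exact cond_flip rfl rfl
    | g'w i => exact cond_flip rfl rfl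
    | g'k1 i => exact cond_flip rfl rfl
    | g'k0 i => exact cond_flip rfl rfl
    | f'v i => exact cond_flip rfl rfl
    | f'w i => exact cond_flip rfl rfl
    | f'k0 i => exact cond_flip rfl rfl
    | f'k1 i => exact cond_flip rfl rfl
    | t0k0a i => exact cond_flip rfl rfl
    | t0k0b i => exact cond_flip rfl rfl
    | t0X0 i => exact cond_flip rfl rfl
    | t0X1 i => exact cond_flip rfl rfl
    | t0X2 i => exact cond_flip rfl rfl
    | t0v0 i =>
        first
        | (refine cond_flip rfl ?_; simp only [mkW, WgE]; rw [vIdx_mod]; decide)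
        | (refine cond_zero rfl rfl ?_; simp only [mkW, WgE]; rw [vIdx_mod]; decide)
    | t0v1 i =>
        first
        | (refine cond_flip rfl ?_; simp only [mkW, WgE]; rw [vIdx_mod]; decide)
        | (refine cond_zero rfl rfl ?_; simp only [mkW, WgE]; rw [vIdx_mod]; decide)
    | t0v2 i =>
        first
        | (refine cond_flip rfl ?_; simp only [mkW, WgE]; rw [vIdx_mod]; decide)
        | (refine cond_zero rfl rfl ?_; simp only [mkW, WgE]; rw [vIdx_mod]; decide)
    | t0v3 i =>
        first
        | (refine cond_flip rfl ?_; simp only [mkW, WgE]; rw [vIdx_mod]; decide)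
        | (refine cond_zero rfl rfl ?_; simp only [mkW, WgE]; rw [vIdx_mod]; decide)
    | t0v4 i =>
        first
        | (refine cond_flip rfl ?_; simp only [mkW, WgE]; rw [vIdx_mod]; decide)
        | (refine cond_zero rfl rfl ?_; simp only [mkW, WgE]; rw [vIdx_mod]; decide)
    | t0v5 i =>
        first
        | (refine cond_flip rfl ?_; simp only [mkW, WgE]; rw [vIdx_mod]; decide)
        | (refine cond_zero rfl rfl ?_; simp only [mkW, WgE]; rw [vIdx_mod]; decide)
    | t1v6 i =>
        first
        | (refine cond_flip rfl ?_; simp only [mkW, WgE]; rw [vIdx_mod]; decide)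
        | (refine cond_zero rfl rfl ?_; simp only [mkW, WgE]; rw [vIdx_mod]; decide)
    | t1X0 i => exact cond_flip rfl rfl
    | t1X2 i => exact cond_flip rfl rfl
    | t0'k1a i => exact cond_flip rfl rfl
    | t0'k1b i => exact cond_flip rfl rfl
    | t0'v0 i => exact cond_flip rfl rfl
    | t0'v1 i => exact cond_flip rfl rfl
    | t0'v2 i => exact cond_flip rfl rfl
    | t0'v3 i => exact cond_flip rfl rfl
    | t0'v4 i => exact cond_flip rfl rfl
    | t0'v5 i => exact cond_flip rfl rfl
    | t0'X0 i => exact cond_flip rfl rfl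
    | t0'X1 i => exact cond_flip rfl rfl
    | t0'X2 i => exact cond_flip rfl rfl
    | t1'X0 i => exact cond_flip rfl rfl
    | t1'v6 i => exact cond_flip rfl rfl
    | t1'X2 i => exact cond_flip rfl rfl

end RegionE

section RegionE'
variable {m : ℕ} (c0 c1 c2 : Fin m → Fin m)

/-! Region E': all `v'_j` with `j ≡ p [MOD 7]` zero, everything else swap. -/

def supE' (p : Fin 7) : BState m → Bool
  | .g' i j => if i.val % 7 = p.val then pv j.val else parN j.val
  | .f' i j => if i.val % 7 = p.val then pv j.val else parN j.val
  | .t0' _ j => t0pat p j.val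
  | .t1' _ j => t1pat p j.val
  | .g _ j => parN j.val | .f _ j => parN j.val
  | .t0 _ j => parN j.val | .t1 _ j => parN j.val
  | _ => false

def WgE' (p : Fin 7) : BEvent m → Bool
  | .v' j => decide (¬ j.val % 7 = p.val)
  | _ => true

lemma edgeok_E' (p : Fin 7) : EdgeOK c0 c1 c2 (supE' p) (mkW (supE' p) (WgE' p)) := by
  have hc : ∀ x : BState m, isConn x = true → supE' p x = false :=
    hconn_of _ rfl (fun _ => rfl) (fun _ => rfl)
  fin_cases p <;>
  · intro s e s' h
    cases h with
    | oplus j => exact cond_oplus hc _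
    | otimes j => exact cond_otimes hc _
    | odot j => exact cond_odot hc _
    | odot' j => exact cond_odot' hc _
    | ominus0 i => exact cond_om0 hc _
    | ominus1 i => exact cond_om1 hc _
    | ominus0' i => exact cond_om0' hc _
    | ominus1' i => exact cond_om1' hc _
    | g'v i => exact cond_v rfl rfl rfl rfl rfl rfl
    | f'v i => exact cond_v rfl rfl rfl rfl rfl rfl
    | g'w i => exact cond_f2 rfl rfl rfl rfl rfl
    | g'k1 i => exact cond_f2 rfl rfl rfl rfl rfl
    | g'k0 i => exact cond_f2 rfl rfl rfl rfl rfl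
    | f'w i => exact cond_f2 rfl rfl rfl rfl rfl
    | f'k0 i => exact cond_f2 rfl rfl rfl rfl rfl
    | f'k1 i => exact cond_f2 rfl rfl rfl rfl rfl
    | gv i => exact cond_flip rfl rfl
    | gw i => exact cond_flip rfl rfl
    | gk0 i => exact cond_flip rfl rfl
    | gk1 i => exact cond_flip rfl rfl
    | fv i => exact cond_flip rfl rfl
    | fw i => exact cond_flip rfl rfl
    | fk1 i => exact cond_flip rfl rfl
    | fk0 i => exact cond_flip rfl rfl
    | t0'k1a i => exact cond_flip rfl rfl
    | t0'k1b i => exact cond_flip rfl rfl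
    | t0'X0 i => exact cond_flip rfl rfl
    | t0'X1 i => exact cond_flip rfl rfl
    | t0'X2 i => exact cond_flip rfl rfl
    | t0'v0 i =>
        first
        | (refine cond_flip rfl ?_; simp only [mkW, WgE']; rw [vIdx_mod]; decide)
        | (refine cond_zero rfl rfl ?_; simp only [mkW, WgE']; rw [vIdx_mod]; decide)
    | t0'v1 i =>
        first
        | (refine cond_flip rfl ?_; simp only [mkW, WgE']; rw [vIdx_mod]; decide)
        | (refine cond_zero rfl rfl ?_; simp only [mkW, WgE']; rw [vIdx_mod]; decide)
    | t0'v2 i =>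
        first
        | (refine cond_flip rfl ?_; simp only [mkW, WgE']; rw [vIdx_mod]; decide)
        | (refine cond_zero rfl rfl ?_; simp only [mkW, WgE']; rw [vIdx_mod]; decide)
    | t0'v3 i =>
        first
        | (refine cond_flip rfl ?_; simp only [mkW, WgE']; rw [vIdx_mod]; decide)
        | (refine cond_zero rfl rfl ?_; simp only [mkW, WgE']; rw [vIdx_mod]; decide)
    | t0'v4 i =>
        first
        | (refine cond_flip rfl ?_; simp only [mkW, WgE']; rw [vIdx_mod]; decide)
        | (refine cond_zero rfl rfl ?_; simp only [mkW, WgE']; rw [vIdx_mod]; decide)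
    | t0'v5 i =>
        first
        | (refine cond_flip rfl ?_; simp only [mkW, WgE']; rw [vIdx_mod]; decide)
        | (refine cond_zero rfl rfl ?_; simp only [mkW, WgE']; rw [vIdx_mod]; decide)
    | t1'v6 i =>
        first
        | (refine cond_flip rfl ?_; simp only [mkW, WgE']; rw [vIdx_mod]; decide)
        | (refine cond_zero rfl rfl ?_; simp only [mkW, WgE']; rw [vIdx_mod]; decide)
    | t1'X0 i => exact cond_flip rfl rfl
    | t1'X2 i => exact cond_flip rfl rfl
    | t0k0a i => exact cond_flip rfl rfl
    | t0k0b i => exact cond_flip rfl rfl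
    | t0X0 i => exact cond_flip rfl rfl
    | t0X1 i => exact cond_flip rfl rfl
    | t0X2 i => exact cond_flip rfl rfl
    | t0v0 i => exact cond_flip rfl rfl
    | t0v1 i => exact cond_flip rfl rfl
    | t0v2 i => exact cond_flip rfl rfl
    | t0v3 i => exact cond_flip rfl rfl
    | t0v4 i => exact cond_flip rfl rfl
    | t0v5 i => exact cond_flip rfl rfl
    | t1X0 i => exact cond_flip rfl rfl
    | t1v6 i => exact cond_flip rfl rfl
    | t1X2 i => exact cond_flip rfl rfl

end RegionE'

section Main
variable {m : ℕ} (c0 c1 c2 : Fin m → Fin m)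

lemma gcov5 : ∀ j j2 : Fin 5, j ≠ j2 → parN j.val ≠ parN j2.val ∨ pw j.val ≠ pw j2.val ∨
    pG j.val ≠ pG j2.val ∨ pv j.val ≠ pv j2.val := by decide

lemma fcov5 : ∀ j j2 : Fin 5, j ≠ j2 → parN j.val ≠ parN j2.val ∨ pw j.val ≠ pw j2.val ∨
    pF j.val ≠ pF j2.val ∨ pv j.val ≠ pv j2.val := by decide

lemma supE_g_self (i : Fin (7 * m)) (j : Fin 5) {h} :
    supE ⟨i.val % 7, h⟩ (.g i j) = pv j.val := by
  show (if i.val % 7 = i.val % 7 then pv j.val else parN j.val) = pv j.val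
  rw [if_pos rfl]

lemma supE_f_self (i : Fin (7 * m)) (j : Fin 5) {h} :
    supE ⟨i.val % 7, h⟩ (.f i j) = pv j.val := by
  show (if i.val % 7 = i.val % 7 then pv j.val else parN j.val) = pv j.val
  rw [if_pos rfl]

lemma supE'_g'_self (i : Fin (7 * m)) (j : Fin 5) {h} :
    supE' ⟨i.val % 7, h⟩ (.g' i j) = pv j.val := by
  show (if i.val % 7 = i.val % 7 then pv j.val else parN j.val) = pv j.val
  rw [if_pos rfl]

lemma supE'_f'_self (i : Fin (7 * m)) (j : Fin 5) {h} :
    supE' ⟨i.val % 7, h⟩ (.f' i j) = pv j.val := by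
  show (if i.val % 7 = i.val % 7 then pv j.val else parN j.val) = pv j.val
  rw [if_pos rfl]

def shfun (s t : BState m) : BState m → Bool := fun x =>
  if x = inst s then !parS s else if x = inst t then parS t else false

lemma supSh_val (sh : BState m → Bool) (x : BState m) (hx : isConn x = false) :
    supSh sh x = Bool.xor (sh (inst x)) (parS x) := by
  unfold supSh
  rw [hx]
  rfl

end Main


/-- for a `nop`-free type `τ` with `swap ∈ τ` and
`τ ∩ save ≠ ∅`, and an instance `φ` of cubic monotone 1-in-3 3SAT, if `φ` has
a one-in-three model, then the bi-directed TS `A_φ` has the `τ`-SSP. -/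
theorem model_implies_Aphi_bidirected_ssp
    {m : ℕ} (c0 c1 c2 : Fin m → Fin m) (hcubic : CubicMonotone c0 c1 c2)
    (τ : Set Interaction) (hnf : Interaction.nop ∉ τ)
    (hswap : Interaction.swap ∈ τ) (hsave : (τ ∩ saveSet).Nonempty)
    (M : Set (Fin m)) (hM : OneInThreeModel c0 c1 c2 M) :
    HasSSP (BEdge c0 c1 c2) τ := by
  classical
  obtain ⟨σ, hστ, hσs⟩ := hsave
  have hσn : σ ≠ Interaction.nop := fun h => hnf (h ▸ hστ)
  set MB : Fin m → Bool := fun x => decide (x ∈ M) with hMB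
  have hM13 : ∀ i, (MB (c0 i) = true ∧ MB (c1 i) = false ∧ MB (c2 i) = false) ∨
      (MB (c0 i) = false ∧ MB (c1 i) = true ∧ MB (c2 i) = false) ∨
      (MB (c0 i) = false ∧ MB (c1 i) = false ∧ MB (c2 i) = true) := by
    intro i
    rcases hM i with ⟨h1, h2, h3⟩ | ⟨h1, h2, h3⟩ | ⟨h1, h2, h3⟩
    · exact Or.inl ⟨by simp [hMB, h1], by simp [hMB, h2], by simp [hMB, h3]⟩
    · exact Or.inr (Or.inl ⟨by simp [hMB, h1], by simp [hMB, h2], by simp [hMB, h3]⟩)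
    · exact Or.inr (Or.inr ⟨by simp [hMB, h1], by simp [hMB, h2], by simp [hMB, h3]⟩)
  intro s t hst
  by_cases hcs : isConn s = true
  · refine solve hswap hστ hσs hσn (edgeok_I c0 c1 c2 s hcs) ?_
    show decide (s = s) ≠ decide (t = s)
    rw [decide_eq_true (Eq.refl s), decide_eq_false (fun h => hst h.symm)]
    decide
  by_cases hct : isConn t = true
  · refine solve hswap hστ hσs hσn (edgeok_I c0 c1 c2 t hct) ?_
    show decide (s = t) ≠ decide (t = t)
    rw [decide_eq_true (Eq.refl t), decide_eq_false hst]
    decide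
  have hgs : isConn s = false := by revert hcs; cases isConn s <;> simp
  have hgt : isConn t = false := by revert hct; cases isConn t <;> simp
  by_cases hi : inst s = inst t
  · -- the two states lie in the same gadget
    cases s with
    | iota => exact absurd rfl hcs
    | bot j => exact absurd rfl hcs
    | top j => exact absurd rfl hcs
    | g i j =>
      obtain ⟨j2, rfl⟩ : ∃ j2, t = BState.g i j2 := by cases t <;> simp_all [inst]
      have hj : j ≠ j2 := fun h => hst (by rw [h])
      rcases gcov5 j j2 hj with hp | hp | hp | hp
      · exact solve hswap hστ hσs hσn (edgeok_E' c0 c1 c2 0) hp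
      · exact solve hswap hστ hσs hσn (edgeok_A c0 c1 c2) hp
      · exact solve hswap hστ hσs hσn (edgeok_B c0 c1 c2 MB hM13) hp
      · refine solve hswap hστ hσs hσn
          (edgeok_E c0 c1 c2 ⟨i.val % 7, Nat.mod_lt _ (by norm_num)⟩) ?_
        rw [supE_g_self i j, supE_g_self i j2]; exact hp
    | f i j =>
      obtain ⟨j2, rfl⟩ : ∃ j2, t = BState.f i j2 := by cases t <;> simp_all [inst]
      have hj : j ≠ j2 := fun h => hst (by rw [h])
      rcases fcov5 j j2 hj with hp | hp | hp | hp
      · exact solve hswap hστ hσs hσn (edgeok_E' c0 c1 c2 0) hp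
      · exact solve hswap hστ hσs hσn (edgeok_A c0 c1 c2) hp
      · exact solve hswap hστ hσs hσn (edgeok_B c0 c1 c2 MB hM13) hp
      · refine solve hswap hστ hσs hσn
          (edgeok_E c0 c1 c2 ⟨i.val % 7, Nat.mod_lt _ (by norm_num)⟩) ?_
        rw [supE_f_self i j, supE_f_self i j2]; exact hp
    | g' i j =>
      obtain ⟨j2, rfl⟩ : ∃ j2, t = BState.g' i j2 := by cases t <;> simp_all [inst]
      have hj : j ≠ j2 := fun h => hst (by rw [h])
      rcases fcov5 j j2 hj with hp | hp | hp | hp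
      · exact solve hswap hστ hσs hσn (edgeok_E c0 c1 c2 0) hp
      · exact solve hswap hστ hσs hσn (edgeok_A' c0 c1 c2) hp
      · exact solve hswap hστ hσs hσn (edgeok_B c0 c1 c2 MB hM13) hp
      · refine solve hswap hστ hσs hσn
          (edgeok_E' c0 c1 c2 ⟨i.val % 7, Nat.mod_lt _ (by norm_num)⟩) ?_
        rw [supE'_g'_self i j, supE'_g'_self i j2]; exact hp
    | f' i j =>
      obtain ⟨j2, rfl⟩ : ∃ j2, t = BState.f' i j2 := by cases t <;> simp_all [inst]
      have hj : j ≠ j2 := fun h => hst (by rw [h])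
      rcases gcov5 j j2 hj with hp | hp | hp | hp
      · exact solve hswap hστ hσs hσn (edgeok_E c0 c1 c2 0) hp
      · exact solve hswap hστ hσs hσn (edgeok_A' c0 c1 c2) hp
      · exact solve hswap hστ hσs hσn (edgeok_B c0 c1 c2 MB hM13) hp
      · refine solve hswap hστ hσs hσn
          (edgeok_E' c0 c1 c2 ⟨i.val % 7, Nat.mod_lt _ (by norm_num)⟩) ?_
        rw [supE'_f'_self i j, supE'_f'_self i j2]; exact hp
    | t0 i j =>
      obtain ⟨j2, rfl⟩ : ∃ j2, t = BState.t0 i j2 := by cases t <;> simp_all [inst]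
      have hj : j ≠ j2 := fun h => hst (by rw [h])
      obtain ⟨p, hp⟩ := t0cov j j2 hj
      exact solve hswap hστ hσs hσn (edgeok_E c0 c1 c2 p) hp
    | t1 i j =>
      obtain ⟨j2, rfl⟩ : ∃ j2, t = BState.t1 i j2 := by cases t <;> simp_all [inst]
      have hj : j ≠ j2 := fun h => hst (by rw [h])
      obtain ⟨p, hp⟩ := t1cov j j2 hj
      exact solve hswap hστ hσs hσn (edgeok_E c0 c1 c2 p) hp
    | t0' i j =>
      obtain ⟨j2, rfl⟩ : ∃ j2, t = BState.t0' i j2 := by cases t <;> simp_all [inst]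
      have hj : j ≠ j2 := fun h => hst (by rw [h])
      obtain ⟨p, hp⟩ := t0cov j j2 hj
      exact solve hswap hστ hσs hσn (edgeok_E' c0 c1 c2 p) hp
    | t1' i j =>
      obtain ⟨j2, rfl⟩ : ∃ j2, t = BState.t1' i j2 := by cases t <;> simp_all [inst]
      have hj : j ≠ j2 := fun h => hst (by rw [h])
      obtain ⟨p, hp⟩ := t1cov j j2 hj
      exact solve hswap hστ hσs hσn (edgeok_E' c0 c1 c2 p) hp
  · -- different gadgets: all-swap region with suitable shifts
    refine solve hswap hστ hσs hσn (edgeok_Sh c0 c1 c2 (shfun s t)) ?_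
    have h1 : supSh (shfun s t) s = true := by
      rw [supSh_val _ _ hgs]
      show Bool.xor (if inst s = inst s then !parS s
        else if inst s = inst t then parS t else false) (parS s) = true
      rw [if_pos rfl]
      cases parS s <;> rfl
    have h2 : supSh (shfun s t) t = false := by
      rw [supSh_val _ _ hgt]
      show Bool.xor (if inst t = inst s then !parS s
        else if inst t = inst t then parS t else false) (parS t) = false
      rw [if_neg (fun h => hi h.symm), if_pos rfl]
      cases parS t <;> rfl
    rw [h1, h2]
    decide
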